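/- arXiv:2204.02394 — 2 statements merged into one kernel-verified Lean document; each statement's English description precedes it below -/
import Mathlib

section
/- For every point cloud X : Fin N → ℝ³, every index i ∈ Fin N, every k with 1 ≤ k ≤ N, every R ∈ SO(3), and every T ∈ ℝ³, the centroid-relative feature transforms as a type-1 vector: f_i(L_{(R,T)}[X]) = R·f_i(X). -/
open Matrix

noncomputable section

/-- `SO(3)`: real 3×3 orthogonal matrices of determinant 1. -/
abbrev SO3 := Matrix.specialOrthogonalGroup (Fin 3) ℝ

noncomputable instance : Group SO3 :=
  { (inferInstance : Monoid SO3) with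
    inv := fun A => ⟨star A.1, ⟨Unitary.star_mem A.2.1, by
      have h : (star A.1).det = star (A.1.det) := by
        rw [Matrix.star_eq_conjTranspose, Matrix.det_conjTranspose]
      have h2 : A.1.det = 1 := A.2.2
      simpa [MonoidHom.mem_mker, h2] using h⟩⟩
    inv_mul_cancel := fun A => Subtype.ext A.2.1.1 }

/-- Euclidean 3-space. -/
abbrev V3 := EuclideanSpace ℝ (Fin 3)

/-- Matrix-vector multiplication on Euclidean 3-space. -/
def mv (M : Matrix (Fin 3) (Fin 3) ℝ) (v : V3) : V3 :=
  (WithLp.equiv 2 (Fin 3 → ℝ)).symm (M *ᵥ (WithLp.equiv 2 (Fin 3 → ℝ) v))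

/-- Roto-translation action `L_{(R,T)}` on point clouds: `(L_{(R,T)}[X]) i = R·(X i) + T`. -/
def rt {N : ℕ} (R : SO3) (T : V3) (X : Fin N → V3) : Fin N → V3 :=
  fun i => mv (R : Matrix (Fin 3) (Fin 3) ℝ) (X i) + T

open scoped Classical in
/-- `d_k(X,i)`: the k-th smallest distance from `X i` to points of `X`. -/
def dk {N : ℕ} (X : Fin N → V3) (i : Fin N) (k : ℕ) : ℝ :=
  sInf { d : ℝ | k ≤ (Finset.univ.filter (fun j => ‖X i - X j‖ ≤ d)).card }

open scoped Classical in
/-- `N_i^k(X)`: the k-nearest-neighbor neighborhood of point `i` (including ties). -/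
def nbhd {N : ℕ} (X : Fin N → V3) (i : Fin N) (k : ℕ) : Finset (Fin N) :=
  Finset.univ.filter (fun j => ‖X i - X j‖ ≤ dk X i k)

/-- The centroid-relative feature `f_i(X) = X i − (1/|N_i^k(X)|)·Σ_{j ∈ N_i^k(X)} X j`. -/
def feat {N : ℕ} (X : Fin N → V3) (i : Fin N) (k : ℕ) : V3 :=
  X i - ((nbhd X i k).card : ℝ)⁻¹ • ∑ j ∈ nbhd X i k, X j


lemma mv_inner (M : Matrix (Fin 3) (Fin 3) ℝ) (h : Mᵀ * M = 1) (u v : V3) :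
    inner ℝ (mv M u) (mv M v) = (inner ℝ u v : ℝ) := by
  simp only [mv, PiLp.inner_apply, RCLike.inner_apply, starRingEnd_apply, star_trivial]
  have : (M *ᵥ (WithLp.equiv 2 (Fin 3 → ℝ) u)) ⬝ᵥ (M *ᵥ (WithLp.equiv 2 (Fin 3 → ℝ) v))
      = (WithLp.equiv 2 (Fin 3 → ℝ) u) ⬝ᵥ (WithLp.equiv 2 (Fin 3 → ℝ) v) := by
    rw [Matrix.dotProduct_mulVec, Matrix.vecMul_mulVec, h, Matrix.vecMul_one]
  simpa [dotProduct, mul_comm] using this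

lemma mv_norm (M : Matrix (Fin 3) (Fin 3) ℝ) (h : Mᵀ * M = 1) (v : V3) :
    ‖mv M v‖ = ‖v‖ := by
  have := mv_inner M h v v
  rw [real_inner_self_eq_norm_sq, real_inner_self_eq_norm_sq] at this
  nlinarith [norm_nonneg (mv M v), norm_nonneg v]

lemma mv_sub (M : Matrix (Fin 3) (Fin 3) ℝ) (u v : V3) :
    mv M (u - v) = mv M u - mv M v := by
  simp [mv, Matrix.mulVec_sub]

lemma mv_smul (M : Matrix (Fin 3) (Fin 3) ℝ) (c : ℝ) (v : V3) :
    mv M (c • v) = c • mv M v := by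
  simp [mv, Matrix.mulVec_smul]

lemma mv_sum {α : Type*} (M : Matrix (Fin 3) (Fin 3) ℝ) (s : Finset α) (f : α → V3) :
    mv M (∑ j ∈ s, f j) = ∑ j ∈ s, mv M (f j) := by
  classical
  induction s using Finset.induction with
  | empty => simp [mv]
  | insert _ _ h ih =>
      rw [Finset.sum_insert h, Finset.sum_insert h, ← ih]
      simp [mv, Matrix.mulVec_add]

lemma so3_ortho (R : SO3) : (R : Matrix (Fin 3) (Fin 3) ℝ)ᵀ * (R : Matrix (Fin 3) (Fin 3) ℝ) = 1 := by
  have := R.2.1.1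
  rwa [Matrix.star_eq_conjTranspose, Matrix.conjTranspose_eq_transpose_of_trivial] at this

/-- the centroid-relative feature transforms as a type-1 vector:
`f_i(L_{(R,T)}[X]) = R·f_i(X)`. -/
theorem feat_equivariant (N : ℕ) (X : Fin N → V3) (i : Fin N) (k : ℕ)
    (hk1 : 1 ≤ k) (hkN : k ≤ N) (R : SO3) (T : V3) :
    feat (rt R T X) i k = mv (R : Matrix (Fin 3) (Fin 3) ℝ) (feat X i k) := by
  have hR := so3_ortho R
  set M := (R : Matrix (Fin 3) (Fin 3) ℝ) with hM
  have hdist : ∀ j, ‖rt R T X i - rt R T X j‖ = ‖X i - X j‖ := by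
    intro j
    have : rt R T X i - rt R T X j = mv M (X i - X j) := by
      simp [rt, mv_sub, hM]
    rw [this, mv_norm M hR]
  have hdk : dk (rt R T X) i k = dk X i k := by
    unfold dk; congr 1; ext d; simp [hdist]
  have hnb : nbhd (rt R T X) i k = nbhd X i k := by
    unfold nbhd; ext j; simp [hdist, hdk]
  have hi : i ∈ nbhd X i k := by
    have hdk0 : 0 ≤ dk X i k := by
      apply Real.sInf_nonneg
      intro d hd
      by_contra hneg
      push_neg at hneg
      have : (Finset.univ.filter (fun j => ‖X i - X j‖ ≤ d)).card = 0 := by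
        rw [Finset.card_eq_zero]
        ext j; simp only [Finset.mem_filter, Finset.notMem_empty, iff_false]
        intro ⟨_, hj⟩
        exact absurd (le_trans (norm_nonneg _) hj) (not_le.mpr hneg)
      simp only [Set.mem_setOf_eq, this] at hd
      omega
    simp [nbhd, hdk0]
  have hcard : ((nbhd X i k).card : ℝ) ≠ 0 := by
    have : 0 < (nbhd X i k).card := Finset.card_pos.mpr ⟨i, hi⟩
    exact_mod_cast this.ne'
  rw [feat, feat, hnb]
  have hsum : ∑ j ∈ nbhd X i k, rt R T X j
      = mv M (∑ j ∈ nbhd X i k, X j) + ((nbhd X i k).card : ℝ) • T := by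
    rw [mv_sum]
    simp [rt, Finset.sum_add_distrib, ← Nat.cast_smul_eq_nsmul ℝ, hM]
  rw [hsum, mv_sub, mv_smul, mv_sum]
  simp only [rt]
  rw [smul_add, smul_smul, inv_mul_cancel₀ hcard, one_smul]
  abel
end
end

section
/- Let m, p be positive integers, ρ_in : SO(3) → GL(m,ℝ) a group homomorphism, and ρ_out : SO(3) → O(p) a group homomorphism into the real p×p orthogonal matrices. Let W_Q ∈ ℝ^{p×m} satisfy W_Q·ρ_in(r) = ρ_out(r)·W_Q for all r ∈ SO(3), and let W_K, W_V : ℝ³ → ℝ^{p×m} satisfy W_K(R_r·y)·ρ_in(r) = ρ_out(r)·W_K(y) and W_V(R_r·y)·ρ_in(r) = ρ_out(r)·W_V(y) for all r ∈ SO(3), y ∈ ℝ³. For a point cloud X : Fin N → ℝ³ and features F : Fin N → ℝ^m, define the self-attention layer SA(F,X)_i = Σ_{j ∈ N_i^k(X)} α_X(F)(i,j) · W_V(X j − X i)·F j, where α_X(F)(i,j) = exp(⟨W_Q·F i, W_K(X j − X i)·F j⟩) / Σ_{j' ∈ N_i^k(X)} exp(⟨W_Q·F i, W_K(X j' − X i)·F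 j'⟩). Then the layer is SE(3)-equivariant: for every r ∈ SO(3) with rotation matrix R, every T ∈ ℝ³, and every index i, SA(ρ_in(r)∘F, L_{(R,T)}[X])_i = ρ_out(r)·SA(F,X)_i. -/
open Matrix

noncomputable section

/-- The attention kernel
`α_X(F)(i,j) = exp⟨W_Q·F i, W_K(X j − X i)·F j⟩ / Σ_{j' ∈ N_i^k(X)} exp⟨W_Q·F i, W_K(X j' − X i)·F j'⟩`. -/
def attnKernel {N : ℕ} (m p k : ℕ) (WQ : Matrix (Fin p) (Fin m) ℝ)
    (WK : V3 → Matrix (Fin p) (Fin m) ℝ)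
    (X : Fin N → V3) (F : Fin N → (Fin m → ℝ)) (i j : Fin N) : ℝ :=
  Real.exp ((WQ *ᵥ F i) ⬝ᵥ (WK (X j - X i) *ᵥ F j)) /
    ∑ j' ∈ nbhd X i k, Real.exp ((WQ *ᵥ F i) ⬝ᵥ (WK (X j' - X i) *ᵥ F j'))

/-- The self-attention layer
`SA(F,X)_i = Σ_{j ∈ N_i^k(X)} α_X(F)(i,j) · W_V(X j − X i)·F j`. -/
def selfAttn {N : ℕ} (m p k : ℕ) (WQ : Matrix (Fin p) (Fin m) ℝ)
    (WK WV : V3 → Matrix (Fin p) (Fin m) ℝ)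
    (X : Fin N → V3) (F : Fin N → (Fin m → ℝ)) (i : Fin N) : Fin p → ℝ :=
  ∑ j ∈ nbhd X i k, attnKernel m p k WQ WK X F i j • (WV (X j - X i) *ᵥ F j)


lemma dot_orth {n : ℕ} (A : Matrix (Fin n) (Fin n) ℝ) (h : Aᵀ * A = 1)
    (u v : Fin n → ℝ) : (A *ᵥ u) ⬝ᵥ (A *ᵥ v) = u ⬝ᵥ v := by
  rw [Matrix.dotProduct_mulVec, Matrix.vecMul_mulVec, h, Matrix.vecMul_one]

lemma norm_mv (r : SO3) (v : V3) : ‖mv (r : Matrix (Fin 3) (Fin 3) ℝ) v‖ = ‖v‖ := by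
  have hOrth : (r : Matrix (Fin 3) (Fin 3) ℝ)ᵀ * r = 1 := by
    have := r.2.1.1
    simpa [Matrix.star_eq_conjTranspose, Matrix.conjTranspose_eq_transpose_of_trivial] using this
  have key : ∀ w : V3, ‖w‖ = Real.sqrt ((WithLp.equiv 2 (Fin 3 → ℝ) w) ⬝ᵥ (WithLp.equiv 2 (Fin 3 → ℝ) w)) := by
    intro w
    rw [EuclideanSpace.norm_eq]
    congr 1
    simp [dotProduct, Real.norm_eq_abs, sq_abs, pow_two]
  rw [key, key]
  congr 1
  show ((r : Matrix (Fin 3) (Fin 3) ℝ) *ᵥ _) ⬝ᵥ _ = _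
  exact dot_orth _ hOrth _ _

lemma mulVec_finset_sum {α n q : ℕ} (s : Finset (Fin α)) (O : Matrix (Fin n) (Fin q) ℝ)
    (f : Fin α → Fin q → ℝ) : O *ᵥ ∑ j ∈ s, f j = ∑ j ∈ s, O *ᵥ f j := by
  simp only [← Matrix.mulVecLin_apply]
  exact map_sum (Matrix.mulVecLin O) f s

lemma rt_sub {N : ℕ} (r : SO3) (T : V3) (X : Fin N → V3) (i j : Fin N) :
    rt r T X i - rt r T X j = mv (r : Matrix (Fin 3) (Fin 3) ℝ) (X i - X j) := by
  show (mv _ (X i) + T) - (mv _ (X j) + T) = mv _ (X i - X j)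
  rw [add_sub_add_right_eq_sub]
  unfold mv
  simp [Matrix.mulVec_sub]

lemma norm_rt_sub {N : ℕ} (r : SO3) (T : V3) (X : Fin N → V3) (i j : Fin N) :
    ‖rt r T X i - rt r T X j‖ = ‖X i - X j‖ := by
  rw [rt_sub, norm_mv]

lemma dk_rt {N : ℕ} (r : SO3) (T : V3) (X : Fin N → V3) (i : Fin N) (k : ℕ) :
    dk (rt r T X) i k = dk X i k := by
  unfold dk
  congr 1
  ext d
  simp [norm_rt_sub]

lemma nbhd_rt {N : ℕ} (r : SO3) (T : V3) (X : Fin N → V3) (i : Fin N) (k : ℕ) :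
    nbhd (rt r T X) i k = nbhd X i k := by
  unfold nbhd
  ext j
  simp [norm_rt_sub, dk_rt]

/-- the self-attention layer is SE(3)-equivariant:
`SA(ρ_in(r)∘F, L_{(R,T)}[X])_i = ρ_out(r)·SA(F,X)_i`. -/
theorem selfAttn_equivariant (N m p : ℕ) (hm : 0 < m) (hp : 0 < p)
    (ρin : SO3 →* GL (Fin m) ℝ)
    (ρout : SO3 →* Matrix.orthogonalGroup (Fin p) ℝ)
    (WQ : Matrix (Fin p) (Fin m) ℝ)
    (hWQ : ∀ r : SO3, WQ * ((ρin r : GL (Fin m) ℝ) : Matrix (Fin m) (Fin m) ℝ) =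
      (ρout r : Matrix (Fin p) (Fin p) ℝ) * WQ)
    (WK WV : V3 → Matrix (Fin p) (Fin m) ℝ)
    (hWK : ∀ (r : SO3) (y : V3),
      WK (mv (r : Matrix (Fin 3) (Fin 3) ℝ) y) *
          ((ρin r : GL (Fin m) ℝ) : Matrix (Fin m) (Fin m) ℝ) =
        (ρout r : Matrix (Fin p) (Fin p) ℝ) * WK y)
    (hWV : ∀ (r : SO3) (y : V3),
      WV (mv (r : Matrix (Fin 3) (Fin 3) ℝ) y) *
          ((ρin r : GL (Fin m) ℝ) : Matrix (Fin m) (Fin m) ℝ) =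
        (ρout r : Matrix (Fin p) (Fin p) ℝ) * WV y)
    (X : Fin N → V3) (F : Fin N → (Fin m → ℝ)) (k : ℕ) (hk1 : 1 ≤ k) (hkN : k ≤ N)
    (r : SO3) (T : V3) (i : Fin N) :
    selfAttn m p k WQ WK WV (rt r T X)
        (fun i' => ((ρin r : GL (Fin m) ℝ) : Matrix (Fin m) (Fin m) ℝ) *ᵥ F i') i =
      (ρout r : Matrix (Fin p) (Fin p) ℝ) *ᵥ selfAttn m p k WQ WK WV X F i := by
  have hO : ((ρout r : Matrix (Fin p) (Fin p) ℝ))ᵀ * (ρout r : Matrix (Fin p) (Fin p) ℝ) = 1 := by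
    have := (ρout r).2.1
    simpa [Matrix.star_eq_conjTranspose, Matrix.conjTranspose_eq_transpose_of_trivial] using this
  set ρ : Matrix (Fin m) (Fin m) ℝ := ((ρin r : GL (Fin m) ℝ) : Matrix (Fin m) (Fin m) ℝ)
  set O : Matrix (Fin p) (Fin p) ℝ := (ρout r : Matrix (Fin p) (Fin p) ℝ)
  have hscalar : ∀ j j' : Fin N,
      (WQ *ᵥ (ρ *ᵥ F j)) ⬝ᵥ (WK (rt r T X j' - rt r T X j) *ᵥ (ρ *ᵥ F j')) =
      (WQ *ᵥ F j) ⬝ᵥ (WK (X j' - X j) *ᵥ F j') := by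
    intro j j'
    rw [rt_sub, Matrix.mulVec_mulVec, Matrix.mulVec_mulVec, hWQ r, hWK r,
      ← Matrix.mulVec_mulVec, ← Matrix.mulVec_mulVec]
    exact dot_orth _ hO _ _
  have hker : ∀ j : Fin N,
      attnKernel m p k WQ WK (rt r T X) (fun i' => ρ *ᵥ F i') i j =
      attnKernel m p k WQ WK X F i j := by
    intro j
    unfold attnKernel
    rw [nbhd_rt]
    simp only [hscalar]
  unfold selfAttn
  rw [nbhd_rt, mulVec_finset_sum]
  apply Finset.sum_congr rfl
  intro j hj
  rw [hker, rt_sub, Matrix.mulVec_mulVec, hWV r, ← Matrix.mulVec_mulVec,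
    Matrix.mulVec_smul]
end
end
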